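/- Let (Ω, 𝓔, μ) be a complete probability space, τ : Ω → Ω a measure-preserving ergodic transformation, H a separable complex Hilbert space, and T : Ω → (H →L[ℂ] H) a random bounded operator, i.e. ω ↦ T ω f is measurable for every f ∈ H. Assume T is unitarily invariant under τ: for every ω there exists a unitary operator V ω on H with T (τ ω) = (V ω) ∘ (T ω) ∘ (V ω)⁻¹. Then there exists a compact set K ⊆ ℂ such that spectrum ℂ (T ω) = K for μ-almost every ω; i.e. the spectrum of a metrically transitive random bounded operator is represented by a fixed set. -/

import Mathlib

open MeasureTheory ContinuousLinearMap

noncomputable section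
set_option linter.unusedSectionVars false

namespace SelfAvgSpec

variable {H : Type*} [NormedAddCommGroup H] [InnerProductSpace ℂ H] [CompleteSpace H]

local notation "𝒜" => H →L[ℂ] H

/-- minimum modulus of an operator over the unit sphere -/
def mm (S : 𝒜) : ℝ := ⨅ f : Metric.sphere (0 : H) 1, ‖S f.1‖

lemma mm_bdd (S : 𝒜) : BddBelow (Set.range fun f : Metric.sphere (0 : H) 1 => ‖S f.1‖) :=
  ⟨0, by rintro x ⟨f, rfl⟩; positivity⟩

lemma mm_nonneg (S : 𝒜) : 0 ≤ mm S := Real.iInf_nonneg fun f => norm_nonneg _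

lemma mm_le (S : 𝒜) {f : H} (hf : ‖f‖ = 1) : mm S ≤ ‖S f‖ :=
  ciInf_le (mm_bdd S) (⟨f, by simp [mem_sphere_zero_iff_norm, hf]⟩ : Metric.sphere (0 : H) 1)

lemma le_mm [Nontrivial H] {S : 𝒜} {c : ℝ} (h : ∀ f : H, ‖f‖ = 1 → c ≤ ‖S f‖) : c ≤ mm S := by
  haveI : Nonempty (Metric.sphere (0 : H) 1) :=
    (NormedSpace.sphere_nonempty.mpr zero_le_one).to_subtype
  exact le_ciInf fun f => h f.1 (by simpa [mem_sphere_zero_iff_norm] using f.2)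

lemma mm_mul_norm_le (S : 𝒜) (f : H) : mm S * ‖f‖ ≤ ‖S f‖ := by
  rcases eq_or_ne f 0 with rfl | hf
  · simp
  · have hn : ‖f‖ ≠ 0 := norm_ne_zero_iff.mpr hf
    have hpos : (0:ℝ) < ‖f‖ := lt_of_le_of_ne (norm_nonneg f) (Ne.symm hn)
    have h1 : ‖(((‖f‖⁻¹ : ℝ) : ℂ) • f : H)‖ = 1 := by
      rw [norm_smul, Complex.norm_real, Real.norm_eq_abs, abs_of_nonneg (inv_nonneg.mpr (norm_nonneg f)), inv_mul_cancel₀ hn]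
    have h2 := mm_le S h1
    rw [_root_.map_smul, norm_smul, Complex.norm_real, Real.norm_eq_abs,
      abs_of_nonneg (inv_nonneg.mpr (norm_nonneg f))] at h2
    calc mm S * ‖f‖ ≤ ‖f‖⁻¹ * ‖S f‖ * ‖f‖ := by nlinarith
    _ = ‖S f‖ := by field_simp

lemma mm_pos_of_isUnit [Nontrivial H] {S : 𝒜} (h : IsUnit S) : 0 < mm S := by
  obtain ⟨u, rfl⟩ := h
  set B : 𝒜 := ↑u⁻¹ with hB
  have hBne : B ≠ 0 := by
    intro h0
    obtain ⟨f, hf⟩ := exists_ne (0 : H)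
    have : ((B * (u : 𝒜)) : 𝒜) f = f := by
      rw [hB, Units.inv_mul]; rfl
    rw [ContinuousLinearMap.mul_apply, h0] at this
    simp at this
    exact hf this.symm
  have hBpos : (0:ℝ) < ‖B‖ := norm_pos_iff.mpr hBne
  have hle : ‖B‖⁻¹ ≤ mm (u : 𝒜) := by
    apply le_mm
    intro f hf
    have h1 : B ((u : 𝒜) f) = f := by
      have : ((B * (u : 𝒜)) : 𝒜) f = f := by rw [hB, Units.inv_mul]; rfl
      simpa [mul_apply] using this
    have h2 : ‖f‖ ≤ ‖B‖ * ‖(u : 𝒜) f‖ := by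
      calc ‖f‖ = ‖B ((u : 𝒜) f)‖ := by rw [h1]
      _ ≤ ‖B‖ * ‖(u : 𝒜) f‖ := le_opNorm _ _
    rw [hf] at h2
    rw [inv_le_iff_one_le_mul₀ hBpos]
    linarith
  exact lt_of_lt_of_le (inv_pos.mpr hBpos) hle

lemma norm_le_inv_mm_mul {S : 𝒜} (h : 0 < mm S) (f : H) : ‖f‖ ≤ (mm S)⁻¹ * ‖S f‖ := by
  have := mm_mul_norm_le S f
  rw [le_inv_mul_iff₀ h]
  linarith

lemma isUnit_of_mm_pos {S : 𝒜} (h1 : 0 < mm S) (h2 : 0 < mm (adjoint S)) : IsUnit S := by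
  have hinj : Function.Injective S := by
    intro a b hab
    have h0 : S (a - b) = 0 := by rw [map_sub, hab, sub_self]
    have := norm_le_inv_mm_mul h1 (a - b)
    rw [h0, norm_zero, mul_zero] at this
    have : a - b = 0 := by
      rw [← norm_le_zero_iff]; exact this
    exact sub_eq_zero.mp this
  -- closed range
  have hanti : AntilipschitzWith ⟨(mm S)⁻¹, inv_nonneg.mpr (le_of_lt h1)⟩ S :=
    ContinuousLinearMap.antilipschitz_of_bound S (norm_le_inv_mm_mul h1)
  have hclosed : IsClosed (Set.range S) := hanti.isClosed_range S.uniformContinuous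
  -- dense range
  have horth : (LinearMap.range (S : H →ₗ[ℂ] H))ᗮ = ⊥ := by
    rw [Submodule.eq_bot_iff]
    intro g hg
    have hadj : adjoint S g = 0 := by
      have : ∀ f : H, inner ℂ (adjoint S g) f = (0 : ℂ) := by
        intro f
        rw [adjoint_inner_left]
        have hSf : (S f : H) ∈ LinearMap.range (S : H →ₗ[ℂ] H) := LinearMap.mem_range_self _ f
        have h0 := (Submodule.mem_orthogonal _ g).mp hg (S f) hSf
        rw [← inner_conj_symm]
        rw [h0, map_zero]
      have := this (adjoint S g)
      rwa [inner_self_eq_zero] at this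
    have := norm_le_inv_mm_mul h2 g
    rw [hadj, norm_zero, mul_zero] at this
    rw [← norm_le_zero_iff]; exact this
  have hcs : CompleteSpace (LinearMap.range (S : H →ₗ[ℂ] H)) := by
    have : IsClosed ((LinearMap.range (S : H →ₗ[ℂ] H) : Submodule ℂ H) : Set H) := by
      have : ((LinearMap.range (S : H →ₗ[ℂ] H) : Submodule ℂ H) : Set H) = Set.range S := by
        ext x; simp [LinearMap.mem_range]
      rw [this]; exact hclosed
    exact this.completeSpace_coe
  have hrange : LinearMap.range (S : H →ₗ[ℂ] H) = ⊤ := by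
    rw [← Submodule.orthogonal_eq_bot_iff]
    exact horth
  rw [ContinuousLinearMap.isUnit_iff_bijective]
  exact ⟨hinj, LinearMap.range_eq_top.mp hrange⟩

end SelfAvgSpec

namespace SelfAvgSpec

variable {H : Type*} [NormedAddCommGroup H] [InnerProductSpace ℂ H] [CompleteSpace H]

local notation "𝒜" => H →L[ℂ] H

lemma mm_conj [Nontrivial H] (V : H ≃ₗᵢ[ℂ] H) (S : 𝒜) :
    mm ((V : 𝒜) ∘L S ∘L ((V.symm : H ≃ₗᵢ[ℂ] H) : 𝒜)) = mm S := by
  set W : 𝒜 := (V : 𝒜) ∘L S ∘L ((V.symm : H ≃ₗᵢ[ℂ] H) : 𝒜) with hW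
  have happ : ∀ f : H, W f = V (S (V.symm f)) := fun f => rfl
  apply le_antisymm
  · apply le_mm
    intro f hf
    have h1 : ‖(V f : H)‖ = 1 := by rw [V.norm_map, hf]
    have := mm_le W h1
    calc mm W ≤ ‖W (V f)‖ := this
    _ = ‖S f‖ := by rw [happ, V.symm_apply_apply, V.norm_map]
  · apply le_mm
    intro f hf
    have h1 : ‖(V.symm f : H)‖ = 1 := by rw [V.symm.norm_map, hf]
    have := mm_le S h1
    calc mm S ≤ ‖S (V.symm f)‖ := this
    _ = ‖W f‖ := by rw [happ, V.norm_map]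

/-- test function whose zero set is the spectrum -/
def φ (S : 𝒜) (z : ℂ) : ℝ :=
  min (mm (algebraMap ℂ 𝒜 z - S)) (mm (adjoint (algebraMap ℂ 𝒜 z - S)))

lemma φ_nonneg (S : 𝒜) (z : ℂ) : 0 ≤ φ S z := le_min (mm_nonneg _) (mm_nonneg _)

lemma φ_eq_zero_iff [Nontrivial H] (S : 𝒜) (z : ℂ) :
    φ S z = 0 ↔ z ∈ spectrum ℂ S := by
  rw [spectrum.mem_iff]
  constructor
  · intro h0 hu
    have h1 : 0 < mm (algebraMap ℂ 𝒜 z - S) := mm_pos_of_isUnit hu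
    have hu' : IsUnit (adjoint (algebraMap ℂ 𝒜 z - S)) := by
      rw [← ContinuousLinearMap.star_eq_adjoint]
      exact hu.star
    have h2 : 0 < mm (adjoint (algebraMap ℂ 𝒜 z - S)) := mm_pos_of_isUnit hu'
    have : 0 < φ S z := lt_min h1 h2
    rw [h0] at this; exact lt_irrefl 0 this
  · intro hnu
    by_contra hne
    have hpos : 0 < φ S z := lt_of_le_of_ne (φ_nonneg S z) (Ne.symm hne)
    exact hnu (isUnit_of_mm_pos (lt_of_lt_of_le hpos (min_le_left _ _))
      (lt_of_lt_of_le hpos (min_le_right _ _)))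

lemma mm_le_add_norm_sub [Nontrivial H] (S S' : 𝒜) : mm S ≤ mm S' + ‖S - S'‖ := by
  have h : ∀ f : H, ‖f‖ = 1 → mm S - ‖S - S'‖ ≤ ‖S' f‖ := by
    intro f hf
    have h1 : mm S ≤ ‖S f‖ := mm_le S hf
    have h2 : ‖S f‖ ≤ ‖S' f‖ + ‖(S - S') f‖ := by
      have : S f = S' f + (S - S') f := by simp
      rw [this]; exact norm_add_le _ _
    have h3 : ‖(S - S') f‖ ≤ ‖S - S'‖ := by
      have := (S - S').le_opNorm f
      rw [hf, mul_one] at this; exact this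
    linarith
  have := le_mm h
  linarith

lemma φ_lipschitz [Nontrivial H] (S : 𝒜) (z w : ℂ) :
    φ S z ≤ φ S w + ‖z - w‖ := by
  have hd : (algebraMap ℂ 𝒜 z - S) - (algebraMap ℂ 𝒜 w - S) = algebraMap ℂ 𝒜 (z - w) := by
    rw [map_sub]; abel
  have hnorm : ‖(algebraMap ℂ 𝒜 z - S) - (algebraMap ℂ 𝒜 w - S)‖ = ‖z - w‖ := by
    rw [hd, norm_algebraMap']
  have h1 : mm (algebraMap ℂ 𝒜 z - S) ≤ mm (algebraMap ℂ 𝒜 w - S) + ‖z - w‖ := by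
    have := mm_le_add_norm_sub (algebraMap ℂ 𝒜 z - S) (algebraMap ℂ 𝒜 w - S)
    rwa [hnorm] at this
  have h2 : mm (adjoint (algebraMap ℂ 𝒜 z - S)) ≤
      mm (adjoint (algebraMap ℂ 𝒜 w - S)) + ‖z - w‖ := by
    have := mm_le_add_norm_sub (adjoint (algebraMap ℂ 𝒜 z - S)) (adjoint (algebraMap ℂ 𝒜 w - S))
    have heq : ‖adjoint (algebraMap ℂ 𝒜 z - S) - adjoint (algebraMap ℂ 𝒜 w - S)‖
        = ‖z - w‖ := by
      rw [← map_sub (ContinuousLinearMap.adjoint (𝕜 := ℂ) (E := H) (F := H))]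
      rw [← ContinuousLinearMap.star_eq_adjoint, norm_star, hnorm]
    rwa [heq] at this
  have hstep : φ S z ≤ min (mm (algebraMap ℂ 𝒜 w - S) + ‖z - w‖) (mm (adjoint (algebraMap ℂ 𝒜 w - S)) + ‖z - w‖) :=
    le_min ((min_le_left _ _).trans h1) ((min_le_right _ _).trans h2)
  rwa [min_add_add_right] at hstep

/-- the rational point associated to `q : ℚ × ℚ` -/
def cpx (q : ℚ × ℚ) : ℂ := (q.1 : ℝ) + (q.2 : ℝ) * Complex.I

lemma exists_cpx_near (z : ℂ) {ε : ℝ} (hε : 0 < ε) : ∃ q : ℚ × ℚ, ‖cpx q - z‖ < ε := by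
  obtain ⟨q1, hq1⟩ := exists_rat_near z.re (half_pos hε)
  obtain ⟨q2, hq2⟩ := exists_rat_near z.im (half_pos hε)
  refine ⟨(q1, q2), ?_⟩
  have hre : (cpx (q1, q2) - z).re = (q1 : ℝ) - z.re := by simp [cpx]
  have him : (cpx (q1, q2) - z).im = (q2 : ℝ) - z.im := by simp [cpx]
  calc ‖cpx (q1, q2) - z‖ ≤ |(cpx (q1, q2) - z).re| + |(cpx (q1, q2) - z).im| :=
        Complex.norm_le_abs_re_add_abs_im _
  _ < ε := by rw [hre, him, abs_sub_comm ((q1:ℝ)) z.re, abs_sub_comm ((q2:ℝ)) z.im]; linarith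

lemma spectrum_eq_of_forall_cpx [Nontrivial H] {S S' : 𝒜}
    (h : ∀ q : ℚ × ℚ, φ S (cpx q) = φ S' (cpx q)) : spectrum ℂ S = spectrum ℂ S' := by
  have key : ∀ (A B : 𝒜), (∀ q : ℚ × ℚ, φ A (cpx q) = φ B (cpx q)) →
      ∀ z : ℂ, φ A z = 0 → φ B z = 0 := by
    intro A B hAB z hz
    have hle : ∀ ε : ℝ, 0 < ε → φ B z ≤ 0 + ε := by
      intro ε hε
      obtain ⟨q, hq⟩ := exists_cpx_near z (half_pos hε)
      have h1 : φ B z ≤ φ B (cpx q) + ‖z - cpx q‖ := φ_lipschitz B z (cpx q)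
      have h2 : φ A (cpx q) ≤ φ A z + ‖cpx q - z‖ := φ_lipschitz A (cpx q) z
      have h3 : ‖z - cpx q‖ = ‖cpx q - z‖ :=
        norm_sub_rev z (cpx q)
      rw [hz, zero_add] at h2
      rw [← hAB q] at h1
      rw [zero_add]
      calc φ B z ≤ φ A (cpx q) + ‖z - cpx q‖ := h1
      _ ≤ ‖cpx q - z‖ + ‖z - cpx q‖ := by linarith
      _ = 2 * ‖cpx q - z‖ := by rw [h3]; ring
      _ ≤ ε := by linarith
    have := le_of_forall_pos_le_add hle
    exact le_antisymm (by linarith) (φ_nonneg B z)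
  ext z
  rw [← φ_eq_zero_iff, ← φ_eq_zero_iff]
  exact ⟨key S S' h z, key S' S (fun q => (h q).symm) z⟩

end SelfAvgSpec

namespace SelfAvgSpec

variable {H : Type*} [NormedAddCommGroup H] [InnerProductSpace ℂ H] [CompleteSpace H]

local notation "𝒜" => H →L[ℂ] H

lemma mm_eq_iInf_dense [Nontrivial H] (D : Set (Metric.sphere (0 : H) 1))
    (hDd : Dense D) [Nonempty D] (S : 𝒜) :
    mm S = ⨅ f : D, ‖S f.1.1‖ := by
  apply le_antisymm
  · exact le_ciInf fun f => mm_le S (by simpa [mem_sphere_zero_iff_norm] using f.1.2)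
  · apply le_of_forall_pos_le_add
    intro ε hε
    have hb : BddBelow (Set.range fun f : D => ‖S f.1.1‖) :=
      ⟨0, by rintro x ⟨f, rfl⟩; positivity⟩
    have key : ∀ f : H, ‖f‖ = 1 → (⨅ f : D, ‖S f.1.1‖) - ε ≤ ‖S f‖ := by
      intro f hf
      set ε' : ℝ := ε / (‖S‖ + 1) with hε'
      have hSpos : (0:ℝ) < ‖S‖ + 1 := by positivity
      have hε'pos : 0 < ε' := div_pos hε hSpos
      obtain ⟨g, hgD, hgf⟩ := hDd.exists_dist_lt (⟨f, by simp [mem_sphere_zero_iff_norm, hf]⟩ :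
        Metric.sphere (0 : H) 1) hε'pos
      have h1 : (⨅ f : D, ‖S f.1.1‖) ≤ ‖S g.1‖ := ciInf_le hb (⟨g, hgD⟩ : D)
      have h2 : ‖S g.1 - S f‖ ≤ ‖S‖ * ε' := by
        rw [← map_sub]
        calc ‖S (g.1 - f)‖ ≤ ‖S‖ * ‖g.1 - f‖ := S.le_opNorm _
        _ ≤ ‖S‖ * ε' := by
          apply mul_le_mul_of_nonneg_left _ (norm_nonneg S)
          have h' : dist g (⟨f, by simp [mem_sphere_zero_iff_norm, hf]⟩ :
            Metric.sphere (0 : H) 1) < ε' := by rw [dist_comm]; exact hgf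
          rw [Subtype.dist_eq, dist_eq_norm] at h'
          exact le_of_lt h'
      have h3 : ‖S g.1‖ ≤ ‖S f‖ + ‖S‖ * ε' := by
        calc ‖S g.1‖ ≤ ‖S f‖ + ‖S g.1 - S f‖ := by
              have := norm_add_le (S f) (S g.1 - S f); simpa using this
        _ ≤ ‖S f‖ + ‖S‖ * ε' := by linarith
      have h4 : ‖S‖ * ε' ≤ ε := by
        have h5 : ‖S‖ * ε' ≤ (‖S‖ + 1) * ε' := by nlinarith [norm_nonneg S]
        have h6 : (‖S‖ + 1) * ε' = ε := by rw [hε']; field_simp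
        linarith
      linarith
    have := le_mm key
    linarith

lemma norm_eq_iSup_inner [Nontrivial H] (D : Set (Metric.sphere (0 : H) 1))
    (hDd : Dense D) [Nonempty D] (x : H) :
    ‖x‖ = ⨆ g : D, ‖(inner ℂ x g.1.1 : ℂ)‖ := by
  have hbdd : BddAbove (Set.range fun g : D => ‖(inner ℂ x g.1.1 : ℂ)‖) := by
    refine ⟨‖x‖, ?_⟩
    rintro r ⟨g, rfl⟩
    calc ‖(inner ℂ x g.1.1 : ℂ)‖ ≤ ‖x‖ * ‖g.1.1‖ := norm_inner_le_norm _ _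
    _ = ‖x‖ := by
      have : ‖g.1.1‖ = 1 := by simpa [mem_sphere_zero_iff_norm] using g.1.2
      rw [this, mul_one]
  apply le_antisymm
  · rcases eq_or_ne x 0 with rfl | hx
    · simp only [norm_zero]
      exact Real.iSup_nonneg fun g => norm_nonneg _
    · apply le_of_forall_pos_le_add
      intro ε hε
      have hn : ‖x‖ ≠ 0 := norm_ne_zero_iff.mpr hx
      have hpos : (0:ℝ) < ‖x‖ := lt_of_le_of_ne (norm_nonneg x) (Ne.symm hn)
      set u : H := ((‖x‖⁻¹ : ℝ) : ℂ) • x with hu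
      have hu1 : ‖u‖ = 1 := by
        rw [hu, norm_smul, Complex.norm_real, Real.norm_eq_abs,
          abs_of_nonneg (inv_nonneg.mpr (norm_nonneg x)), inv_mul_cancel₀ hn]
      set ε' : ℝ := ε / (‖x‖ + 1) with hε'
      have hxpos : (0:ℝ) < ‖x‖ + 1 := by positivity
      have hε'pos : 0 < ε' := div_pos hε hxpos
      obtain ⟨g0, hgD, hgu⟩ := hDd.exists_dist_lt (⟨u, by simp [mem_sphere_zero_iff_norm, hu1]⟩ :
        Metric.sphere (0 : H) 1) hε'pos
      have hinner_u : ‖(inner ℂ x u : ℂ)‖ = ‖x‖ := by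
        rw [hu, inner_smul_right, norm_mul, Complex.norm_real, Real.norm_eq_abs,
          abs_of_nonneg (inv_nonneg.mpr (norm_nonneg x)), inner_self_eq_norm_sq_to_K,
          norm_pow, RCLike.norm_ofReal, abs_of_nonneg (norm_nonneg x)]
        field_simp
      -- now compare inner with g0 to inner with u
      have hdist : ‖g0.1 - u‖ < ε' := by
        have h' : dist g0 (⟨u, by simp [mem_sphere_zero_iff_norm, hu1]⟩ :
          Metric.sphere (0 : H) 1) < ε' := by rw [dist_comm]; exact hgu
        rw [Subtype.dist_eq, dist_eq_norm] at h'
        exact h'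
      have hcomp : ‖x‖ ≤ ‖(inner ℂ x g0.1 : ℂ)‖ + ε := by
        have hdiff : ‖(inner ℂ x u : ℂ) - (inner ℂ x g0.1 : ℂ)‖ ≤ ‖x‖ * ε' := by
          rw [← inner_sub_right]
          calc ‖(inner ℂ x (u - g0.1) : ℂ)‖ ≤ ‖x‖ * ‖u - g0.1‖ := norm_inner_le_norm _ _
          _ ≤ ‖x‖ * ε' := by
            apply mul_le_mul_of_nonneg_left _ (norm_nonneg x)
            rw [← norm_neg]; simpa using le_of_lt hdist
        have h7 : ‖(inner ℂ x u : ℂ)‖ ≤ ‖(inner ℂ x g0.1 : ℂ)‖ + ‖x‖ * ε' := by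
          calc ‖(inner ℂ x u : ℂ)‖ ≤ ‖(inner ℂ x g0.1 : ℂ)‖ + ‖(inner ℂ x u : ℂ) - (inner ℂ x g0.1 : ℂ)‖ := by
                have := norm_add_le ((inner ℂ x g0.1 : ℂ)) ((inner ℂ x u : ℂ) - (inner ℂ x g0.1 : ℂ))
                simpa using this
          _ ≤ ‖(inner ℂ x g0.1 : ℂ)‖ + ‖x‖ * ε' := by linarith
        have h8 : ‖x‖ * ε' ≤ ε := by
          have h5 : ‖x‖ * ε' ≤ (‖x‖ + 1) * ε' := by nlinarith [norm_nonneg x]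
          have h6 : (‖x‖ + 1) * ε' = ε := by rw [hε']; field_simp
          linarith
        rw [hinner_u] at h7
        linarith
      have h9 : ‖(inner ℂ x g0.1 : ℂ)‖ ≤ ⨆ g : D, ‖(inner ℂ x g.1.1 : ℂ)‖ :=
        le_ciSup hbdd (⟨g0, hgD⟩ : D)
      linarith
  · exact Real.iSup_le (fun g => by
      calc ‖(inner ℂ x g.1.1 : ℂ)‖ ≤ ‖x‖ * ‖g.1.1‖ := norm_inner_le_norm _ _
      _ = ‖x‖ := by
        have : ‖g.1.1‖ = 1 := by simpa [mem_sphere_zero_iff_norm] using g.1.2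
        rw [this, mul_one]) (norm_nonneg x)

end SelfAvgSpec

end

open SelfAvgSpec in
/-- Self-averaging of the spectrum: for a complete probability space, an
ergodic measure-preserving transformation `τ`, and a random bounded operator
`T` on a separable complex Hilbert space which is unitarily invariant under
`τ`, there is a fixed compact set `K ⊆ ℂ` equal to `spectrum ℂ (T ω)` almost
surely. -/
theorem spectrum_of_metrically_transitive_operator_ae_constant
    {Ω : Type*} [MeasurableSpace Ω] (μ : Measure Ω) [IsProbabilityMeasure μ]
    (hμ : μ.IsComplete)
    {τ : Ω → Ω} (hτ : Ergodic τ μ)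
    {H : Type*} [NormedAddCommGroup H] [InnerProductSpace ℂ H] [CompleteSpace H]
    [SecondCountableTopology H] [MeasurableSpace H] [BorelSpace H]
    (T : Ω → (H →L[ℂ] H)) (hT : ∀ f : H, Measurable fun ω => T ω f)
    (V : Ω → (H ≃ₗᵢ[ℂ] H))
    (hinv : ∀ ω (f : H), T (τ ω) f = V ω (T ω ((V ω).symm f))) :
    ∃ K : Set ℂ, IsCompact K ∧ ∀ᵐ ω ∂μ, spectrum ℂ (T ω) = K := by
  classical
  rcases subsingleton_or_nontrivial H with hH | hH
  · haveI : Subsingleton (H →L[ℂ] H) :=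
      ⟨fun a b => ContinuousLinearMap.ext fun x => Subsingleton.elim _ _⟩
    refine ⟨∅, isCompact_empty, Filter.Eventually.of_forall fun ω => ?_⟩
    ext z
    simp only [Set.mem_empty_iff_false, iff_false]
    intro hz
    rw [spectrum.mem_iff] at hz
    exact hz (isUnit_of_subsingleton _)
  · obtain ⟨D, hDc, hDd⟩ :=
      TopologicalSpace.exists_countable_dense ↥(Metric.sphere (0 : H) 1)
    haveI : Countable ↥D := hDc.to_subtype
    haveI hsne : Nonempty ↥(Metric.sphere (0 : H) 1) :=
      (NormedSpace.sphere_nonempty.mpr zero_le_one).to_subtype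
    haveI : Nonempty ↥D := hDd.nonempty.to_subtype
    have happly : ∀ (z : ℂ) (g : H) (ω : Ω),
        (algebraMap ℂ (H →L[ℂ] H) z - T ω) g = z • g - T ω g := by
      intro z g ω
      simp [Algebra.algebraMap_eq_smul_one]
    set F : ℚ × ℚ → Ω → ℝ := fun q ω => φ (T ω) (cpx q) with hF
    have hFmeas : ∀ q, Measurable (F q) := by
      intro q
      set z := cpx q with hz
      have h1 : F q = fun ω =>
          min (⨅ f : D, ‖(algebraMap ℂ (H →L[ℂ] H) z - T ω) f.1.1‖)
            (⨅ f : D, ⨆ g : D,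
              ‖(inner ℂ f.1.1 ((algebraMap ℂ (H →L[ℂ] H) z - T ω) g.1.1) : ℂ)‖) := by
        funext ω
        show φ (T ω) z = _
        unfold φ
        congr 1
        · exact mm_eq_iInf_dense D hDd _
        · rw [mm_eq_iInf_dense D hDd (ContinuousLinearMap.adjoint
            (algebraMap ℂ (H →L[ℂ] H) z - T ω))]
          congr 1
          funext f
          rw [norm_eq_iSup_inner D hDd]
          congr 1
          funext g
          rw [ContinuousLinearMap.adjoint_inner_left]
      rw [h1]
      have hm1 : ∀ g : H, Measurable fun ω => ‖(algebraMap ℂ (H →L[ℂ] H) z - T ω) g‖ := by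
        intro g
        have : (fun ω => ‖(algebraMap ℂ (H →L[ℂ] H) z - T ω) g‖)
            = (fun v : H => ‖z • g - v‖) ∘ (fun ω => T ω g) := by
          funext ω; simp [happly]
        rw [this]
        exact (Continuous.measurable ((continuous_const.sub continuous_id).norm)).comp (hT g)
      have hm2 : ∀ f g : H, Measurable fun ω =>
          ‖(inner ℂ f ((algebraMap ℂ (H →L[ℂ] H) z - T ω) g) : ℂ)‖ := by
        intro f g
        have : (fun ω => ‖(inner ℂ f ((algebraMap ℂ (H →L[ℂ] H) z - T ω) g) : ℂ)‖)
            = (fun v : H => ‖(inner ℂ f (z • g - v) : ℂ)‖) ∘ (fun ω => T ω g) := by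
          funext ω; simp [happly]
        rw [this]
        exact (Continuous.measurable ((Continuous.inner continuous_const
          (continuous_const.sub continuous_id)).norm)).comp (hT g)
      exact Measurable.min (Measurable.iInf fun f => hm1 f.1.1)
        (Measurable.iInf fun f => Measurable.iSup fun g => hm2 f.1.1 g.1.1)
    have hFinv : ∀ q, F q ∘ τ = F q := by
      intro q
      funext ω
      show φ (T (τ ω)) (cpx q) = φ (T ω) (cpx q)
      have hconj : ∀ z : ℂ, algebraMap ℂ (H →L[ℂ] H) z - T (τ ω)
          = ((V ω : H →L[ℂ] H)) ∘L (algebraMap ℂ (H →L[ℂ] H) z - T ω)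
              ∘L (((V ω).symm : H ≃ₗᵢ[ℂ] H) : H →L[ℂ] H) := by
        intro z
        ext f
        rw [happly]
        rw [hinv ω]
        simp [happly, map_sub, _root_.map_smul]
      unfold φ
      congr 1
      · rw [hconj]
        exact mm_conj (V ω) _
      · rw [hconj]
        have hadj : ContinuousLinearMap.adjoint (((V ω : H →L[ℂ] H))
              ∘L (algebraMap ℂ (H →L[ℂ] H) (cpx q) - T ω)
              ∘L (((V ω).symm : H ≃ₗᵢ[ℂ] H) : H →L[ℂ] H))
            = ((V ω : H →L[ℂ] H))
              ∘L (ContinuousLinearMap.adjoint (algebraMap ℂ (H →L[ℂ] H) (cpx q) - T ω))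
              ∘L (((V ω).symm : H ≃ₗᵢ[ℂ] H) : H →L[ℂ] H) := by
          rw [ContinuousLinearMap.adjoint_comp, ContinuousLinearMap.adjoint_comp,
            LinearIsometryEquiv.adjoint_eq_symm, LinearIsometryEquiv.adjoint_eq_symm,
            LinearIsometryEquiv.symm_symm, ContinuousLinearMap.comp_assoc]
        rw [hadj]
        exact mm_conj (V ω) _
    have hconst : ∀ q : ℚ × ℚ, ∃ c : ℝ, F q =ᵐ[μ] fun _ => c := by
      intro q
      exact hτ.ae_eq_const_of_ae_eq_comp₀ (hFmeas q).nullMeasurable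
        (Filter.Eventually.of_forall fun ω => congrFun (hFinv q) ω)
    choose c hc using hconst
    have hae : ∀ᵐ ω ∂μ, ∀ q : ℚ × ℚ, F q ω = c q := ae_all_iff.mpr hc
    have hμne : μ ≠ 0 := IsProbabilityMeasure.ne_zero μ
    haveI : (MeasureTheory.ae μ).NeBot := ae_neBot.mpr hμne
    obtain ⟨ω₀, hω₀⟩ := hae.exists
    refine ⟨spectrum ℂ (T ω₀), spectrum.isCompact _, ?_⟩
    filter_upwards [hae] with ω hω
    exact spectrum_eq_of_forall_cpx fun q => by
      rw [show φ (T ω) (cpx q) = F q ω from rfl, hω q, ← hω₀ q]
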